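/- Let T be a bounded linear operator on a complex Banach space X. Then T is Li-Yorke chaotic if and only if T admits an irregular vector, i.e. a vector x ∈ X with liminf_{n→∞} ‖T^n x‖ = 0 and limsup_{n→∞} ‖T^n x‖ = ∞. -/

import Mathlib

open Filter Topology ENNReal

/-- `T` is Li-Yorke chaotic: it admits an uncountable scrambled set `Γ`, i.e. for all
distinct `u v ∈ Γ`, `liminf ‖Tⁿu − Tⁿv‖ = 0` and `limsup ‖Tⁿu − Tⁿv‖ > 0`
(limits computed in `ℝ≥0∞` so that they are always well defined). -/
def LiYorkeChaotic {𝕜 X : Type*} [NontriviallyNormedField 𝕜]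
    [NormedAddCommGroup X] [NormedSpace 𝕜 X] (T : X →L[𝕜] X) : Prop :=
  ∃ Γ : Set X, ¬Γ.Countable ∧
    ∀ u ∈ Γ, ∀ v ∈ Γ, u ≠ v →
      Filter.liminf (fun n : ℕ => (‖(T ^ n) u - (T ^ n) v‖₊ : ℝ≥0∞)) atTop = 0 ∧
      0 < Filter.limsup (fun n : ℕ => (‖(T ^ n) u - (T ^ n) v‖₊ : ℝ≥0∞)) atTop

/-- `x` is an irregular vector for `T`: `liminf ‖Tⁿx‖ = 0` and `limsup ‖Tⁿx‖ = ∞`. -/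
def IrregularVector {𝕜 X : Type*} [NontriviallyNormedField 𝕜]
    [NormedAddCommGroup X] [NormedSpace 𝕜 X] (T : X →L[𝕜] X) (x : X) : Prop :=
  Filter.liminf (fun n : ℕ => (‖(T ^ n) x‖₊ : ℝ≥0∞)) atTop = 0 ∧
  Filter.limsup (fun n : ℕ => (‖(T ^ n) x‖₊ : ℝ≥0∞)) atTop = ⊤

section Helpers


lemma liminf_nnnorm_zero_iff {X : Type*} [NormedAddCommGroup X] (g : ℕ → X) :
    liminf (fun n => (‖g n‖₊ : ℝ≥0∞)) atTop = 0 ↔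
      ∀ ε : ℝ, 0 < ε → ∀ N : ℕ, ∃ n ≥ N, ‖g n‖ < ε := by
  constructor
  · intro h ε hε N
    have hlt : liminf (fun n => (‖g n‖₊ : ℝ≥0∞)) atTop < (ε.toNNReal : ℝ≥0∞) := by
      rw [h]; exact_mod_cast Real.toNNReal_pos.2 hε
    have := frequently_lt_of_liminf_lt (by isBoundedDefault) hlt
    rw [frequently_atTop] at this
    obtain ⟨n, hn, hlt'⟩ := this N
    refine ⟨n, hn, ?_⟩
    rw [ENNReal.coe_lt_coe] at hlt'
    have : ‖g n‖ < (ε.toNNReal : ℝ) := by exact_mod_cast hlt'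
    rwa [Real.coe_toNNReal ε hε.le] at this
  · intro h
    refine le_antisymm ?_ zero_le
    refine ENNReal.le_of_forall_pos_le_add fun ε hε _ => ?_
    rw [zero_add]
    refine liminf_le_of_frequently_le ?_
    rw [frequently_atTop]
    intro N
    obtain ⟨n, hn, hlt⟩ := h ε (by exact_mod_cast hε) N
    refine ⟨n, hn, ?_⟩
    rw [ENNReal.coe_le_coe]
    have : ‖g n‖ ≤ (ε : ℝ) := hlt.le
    exact_mod_cast this

lemma limsup_nnnorm_top_iff {X : Type*} [NormedAddCommGroup X] (g : ℕ → X) :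
    limsup (fun n => (‖g n‖₊ : ℝ≥0∞)) atTop = ⊤ ↔
      ∀ M : ℝ, ∃ n, M < ‖g n‖ := by
  constructor
  · intro h M
    have hlt : (M.toNNReal : ℝ≥0∞) < limsup (fun n => (‖g n‖₊ : ℝ≥0∞)) atTop := by
      rw [h]; exact ENNReal.coe_lt_top
    obtain ⟨n, -, hn⟩ := (frequently_atTop.1 (frequently_lt_of_lt_limsup (by isBoundedDefault) hlt)) 0
    rw [ENNReal.coe_lt_coe] at hn
    refine ⟨n, lt_of_le_of_lt (Real.le_coe_toNNReal M) ?_⟩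
    exact_mod_cast hn
  · intro h
    by_contra htop
    set c := limsup (fun n => (‖g n‖₊ : ℝ≥0∞)) atTop with hc
    have hlt : c < c + 1 := ENNReal.lt_add_right htop one_ne_zero
    have hev := eventually_lt_of_limsup_lt hlt
    rw [eventually_atTop] at hev
    obtain ⟨N, hN⟩ := hev
    have hne : c + 1 ≠ ⊤ := by
      intro habs
      exact htop (by simpa using ENNReal.add_eq_top.1 habs |>.resolve_right one_ne_top)
    set M : ℝ := (c + 1).toReal + ∑ i ∈ Finset.range N, ‖g i‖ with hM
    obtain ⟨n, hn⟩ := h M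
    have hsum : (0:ℝ) ≤ ∑ i ∈ Finset.range N, ‖g i‖ :=
      Finset.sum_nonneg fun i _ => norm_nonneg _
    rcases le_or_gt N n with hNn | hNn
    · have := hN n hNn
      have h1 : ‖g n‖ ≤ (c + 1).toReal := by
        have := ENNReal.toReal_mono hne this.le
        simpa using this
      linarith
    · have h1 : ‖g n‖ ≤ ∑ i ∈ Finset.range N, ‖g i‖ :=
        Finset.single_le_sum (fun i _ => norm_nonneg (g i)) (Finset.mem_range.2 hNn)
      have h2 : (0:ℝ) ≤ (c+1).toReal := ENNReal.toReal_nonneg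
      linarith

-- helper
lemma irregular_scrambled {X : Type*} [NormedAddCommGroup X] [NormedSpace ℂ X]
    (T : X →L[ℂ] X) (x : X) (hx : IrregularVector T x) :
    ∃ Γ : Set X, ¬Γ.Countable ∧
    ∀ u ∈ Γ, ∀ v ∈ Γ, u ≠ v →
      Filter.liminf (fun n : ℕ => (‖(T ^ n) u - (T ^ n) v‖₊ : ℝ≥0∞)) atTop = 0 ∧
      0 < Filter.limsup (fun n : ℕ => (‖(T ^ n) u - (T ^ n) v‖₊ : ℝ≥0∞)) atTop := by
  obtain ⟨h0, htop⟩ := hx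
  have hx0 : x ≠ 0 := by
    rintro rfl
    rw [show (fun n : ℕ => (‖(T ^ n) (0:X)‖₊ : ℝ≥0∞)) = fun _ => 0 by
      funext n; simp] at htop
    simp [limsup_const] at htop
  set f : ℝ → X := fun t => (t : ℂ) • x with hf
  have hinj : Function.Injective f := by
    intro s t hst
    have : ((s : ℂ) - t) • x = 0 := by
      rw [sub_smul, hf] at *; simp only at hst; rw [hst]; simp
    rcases smul_eq_zero.1 this with h | h
    · have : (s:ℂ) = t := by linear_combination h
      exact_mod_cast this
    · exact absurd h hx0
  refine ⟨Set.range f, ?_, ?_⟩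
  · intro hc
    have := hc.preimage hinj
    rw [Set.preimage_range] at this
    exact Cardinal.not_countable_real this
  · rintro u ⟨a, rfl⟩ v ⟨b, rfl⟩ huv
    have hab : (a:ℂ) ≠ (b:ℂ) := by
      intro h; apply huv; rw [hf]; simp only [h]
    set c : ℝ := ‖(a:ℂ) - (b:ℂ)‖ with hcdef
    have hc : 0 < c := by rwa [hcdef, norm_pos_iff, sub_ne_zero]
    have key : ∀ n : ℕ, (T ^ n) (f a) - (T ^ n) (f b) = ((a:ℂ) - (b:ℂ)) • (T ^ n) x := by
      intro n
      rw [hf]; simp only [map_smul, sub_smul]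
    have hnorm : ∀ n : ℕ, ‖(T ^ n) (f a) - (T ^ n) (f b)‖ = c * ‖(T ^ n) x‖ := by
      intro n; rw [key n, norm_smul, hcdef]
    constructor
    · rw [liminf_nnnorm_zero_iff (fun n => (T ^ n) (f a) - (T ^ n) (f b))]
      intro ε hε N
      obtain ⟨n, hn, hlt⟩ := (liminf_nnnorm_zero_iff (fun n => (T ^ n) x)).1 h0
        (ε / c) (div_pos hε hc) N
      refine ⟨n, hn, ?_⟩
      rw [hnorm n]
      calc c * ‖(T ^ n) x‖ < c * (ε / c) := by
            exact mul_lt_mul_of_pos_left hlt hc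
        _ = ε := by field_simp
    · have hfreq : ∃ᶠ n in atTop,
          (1 : ℝ≥0∞) ≤ (‖(T ^ n) (f a) - (T ^ n) (f b)‖₊ : ℝ≥0∞) := by
        have hlt : ((1/c).toNNReal : ℝ≥0∞) <
            limsup (fun n : ℕ => (‖(T ^ n) x‖₊ : ℝ≥0∞)) atTop := by
          rw [htop]; exact ENNReal.coe_lt_top
        refine (frequently_lt_of_lt_limsup (by isBoundedDefault) hlt).mono fun n hn => ?_
        rw [ENNReal.coe_lt_coe] at hn
        have h1 : 1/c < ‖(T ^ n) x‖ :=
          lt_of_le_of_lt (Real.le_coe_toNNReal _) (by exact_mod_cast hn)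
        have h2 : (1:ℝ) ≤ ‖(T ^ n) (f a) - (T ^ n) (f b)‖ := by
          rw [hnorm n]
          calc (1:ℝ) = c * (1/c) := by field_simp
            _ ≤ c * ‖(T ^ n) x‖ := by
                exact (mul_le_mul_of_nonneg_left h1.le hc.le)
        rw [← ENNReal.coe_one, ENNReal.coe_le_coe]
        exact_mod_cast h2
      exact lt_of_lt_of_le zero_lt_one (le_limsup_of_frequently_le hfreq)


set_option maxHeartbeats 1000000 in
lemma semi_irregular_imp_irregular {X : Type*} [NormedAddCommGroup X] [NormedSpace ℂ X]
    [CompleteSpace X] (T : X →L[ℂ] X) (y : X)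
    (h0 : liminf (fun n : ℕ => (‖(T ^ n) y‖₊ : ℝ≥0∞)) atTop = 0)
    (hpos : 0 < limsup (fun n : ℕ => (‖(T ^ n) y‖₊ : ℝ≥0∞)) atTop) :
    ∃ x : X,
      liminf (fun n : ℕ => (‖(T ^ n) x‖₊ : ℝ≥0∞)) atTop = 0 ∧
      limsup (fun n : ℕ => (‖(T ^ n) x‖₊ : ℝ≥0∞)) atTop = ⊤ := by
  have hy : ∀ ε : ℝ, 0 < ε → ∀ N : ℕ, ∃ n ≥ N, ‖(T ^ n) y‖ < ε :=
    (liminf_nnnorm_zero_iff (fun n => (T ^ n) y)).1 h0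
  set S0 : Set X := Set.range (fun m : ℕ => (T ^ m) y) with hS0
  set p : Submodule ℂ X := Submodule.span ℂ S0 with hp
  set q : Submodule ℂ X := p.topologicalClosure with hq
  haveI : CompleteSpace q := IsClosed.completeSpace_coe (hs := p.isClosed_topologicalClosure)
  haveI : Nonempty q := ⟨0⟩
  haveI : BaireSpace q := BaireSpace.of_completelyPseudoMetrizable
  -- orbit elements lie in q
  have horb : ∀ m : ℕ, (T ^ m) y ∈ q := fun m =>
    Submodule.le_topologicalClosure p (Submodule.subset_span ⟨m, rfl⟩)
  -- uniform comparison on the span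
  have hCw : ∀ w ∈ p, ∃ C : ℝ, 0 ≤ C ∧ ∀ j : ℕ, ‖(T ^ j) w‖ ≤ C * ‖(T ^ j) y‖ := by
    intro w hw
    induction hw using Submodule.span_induction with
    | mem w hwm =>
        obtain ⟨m, rfl⟩ := hwm
        refine ⟨‖T ^ m‖, norm_nonneg _, fun j => ?_⟩
        have : (T ^ j) ((T ^ m) y) = (T ^ m) ((T ^ j) y) := by
          rw [← ContinuousLinearMap.mul_apply, ← ContinuousLinearMap.mul_apply,
            ← pow_add, ← pow_add, add_comm]
        rw [this]
        exact (T ^ m).le_opNorm _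
    | zero => exact ⟨0, le_refl 0, fun j => by simp⟩
    | add w₁ w₂ h₁ h₂ ih₁ ih₂ =>
        obtain ⟨C₁, hC₁0, hC₁⟩ := ih₁
        obtain ⟨C₂, hC₂0, hC₂⟩ := ih₂
        refine ⟨C₁ + C₂, by linarith, fun j => ?_⟩
        calc ‖(T ^ j) (w₁ + w₂)‖ ≤ ‖(T ^ j) w₁‖ + ‖(T ^ j) w₂‖ := by
              rw [map_add]; exact norm_add_le _ _
          _ ≤ C₁ * ‖(T ^ j) y‖ + C₂ * ‖(T ^ j) y‖ := add_le_add (hC₁ j) (hC₂ j)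
          _ = (C₁ + C₂) * ‖(T ^ j) y‖ := by ring
    | smul a w hwmem ih =>
        obtain ⟨C, hC0, hC⟩ := ih
        refine ⟨‖a‖ * C, by positivity, fun j => ?_⟩
        rw [map_smul, norm_smul, mul_assoc]
        exact mul_le_mul_of_nonneg_left (hC j) (norm_nonneg a)
  -- the Gδ set of points with orbit approaching 0
  set D : Set q := {z | ∀ k : ℕ, ∀ N : ℕ, ∃ n ≥ N, ‖(T ^ n) (z : X)‖ < ((k : ℝ) + 1)⁻¹}
    with hD
  have hDGδ : IsGδ D := by
    have hD_eq : D = ⋂ (k : ℕ), ⋂ (N : ℕ), ⋃ (n : ℕ), ⋃ (_ : n ≥ N),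
        {z : q | ‖(T ^ n) (z : X)‖ < ((k : ℝ) + 1)⁻¹} := by
      ext z
      simp only [hD, Set.mem_setOf_eq, Set.mem_iInter, Set.mem_iUnion]
      constructor
      · intro h k N; obtain ⟨n, hn, h'⟩ := h k N; exact ⟨n, hn, h'⟩
      · intro h k N; obtain ⟨n, hn, h'⟩ := h k N; exact ⟨n, hn, h'⟩
    rw [hD_eq]
    refine IsGδ.iInter fun k => IsGδ.iInter fun N => IsOpen.isGδ ?_
    refine isOpen_iUnion fun n => isOpen_iUnion fun _ => ?_
    exact isOpen_lt (((T ^ n).continuous.comp continuous_subtype_val).norm) continuous_const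
  have hDdense : Dense D := by
    rw [Metric.dense_iff]
    intro z r hr
    have hz : (z : X) ∈ closure (p : Set X) := by
      have h2 := z.2
      rw [hq, ← Submodule.topologicalClosure_coe p] at *
      exact h2
    rw [Metric.mem_closure_iff] at hz
    obtain ⟨w0, hw0p, hw0⟩ := hz r hr
    refine ⟨⟨w0, Submodule.le_topologicalClosure p hw0p⟩, ?_, ?_⟩
    · rw [Metric.mem_ball, Subtype.dist_eq, dist_comm]
      exact hw0
    · obtain ⟨C, hC0, hC⟩ := hCw w0 hw0p
      intro k N
      have hik : (0 : ℝ) < ((k : ℝ) + 1)⁻¹ := by positivity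
      have hC1 : (0 : ℝ) < C + 1 := by linarith
      obtain ⟨n, hn, hlt⟩ := hy (((k : ℝ) + 1)⁻¹ / (C + 1)) (by positivity) N
      refine ⟨n, hn, ?_⟩
      calc ‖(T ^ n) w0‖ ≤ C * ‖(T ^ n) y‖ := hC n
        _ ≤ (C + 1) * ‖(T ^ n) y‖ := by nlinarith [norm_nonneg ((T ^ n) y)]
        _ < (C + 1) * (((k : ℝ) + 1)⁻¹ / (C + 1)) := mul_lt_mul_of_pos_left hlt hC1
        _ = ((k : ℝ) + 1)⁻¹ := by field_simp
  -- the closed sets of uniformly bounded orbits have empty interior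
  set B : ℕ → Set q := fun M => {z : q | ∀ n : ℕ, ‖(T ^ n) (z : X)‖ ≤ (M : ℝ)} with hB
  have hBclosed : ∀ M : ℕ, IsClosed (B M) := by
    intro M
    have : B M = ⋂ n : ℕ, {z : q | ‖(T ^ n) (z : X)‖ ≤ (M : ℝ)} := by
      ext z; simp [hB]
    rw [this]
    exact isClosed_iInter fun n =>
      isClosed_le (((T ^ n).continuous.comp continuous_subtype_val).norm) continuous_const
  have hBint : ∀ M : ℕ, interior (B M) = ∅ := by
    intro M
    rw [← Set.not_nonempty_iff_eq_empty]
    rintro ⟨z0, hz0⟩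
    obtain ⟨r, hr, hball⟩ := Metric.isOpen_iff.1 isOpen_interior z0 hz0
    have hball' : Metric.ball z0 r ⊆ B M := hball.trans interior_subset
    -- uniform bound on all of q
    set K : ℝ := 4 * (M : ℝ) / r + 1 with hK
    have hKpos : 0 < K := by positivity
    have hbd : ∀ v : X, v ∈ q → ∀ n : ℕ, ‖(T ^ n) v‖ ≤ K * ‖v‖ := by
      intro v hv n
      rcases eq_or_ne v 0 with rfl | hv0
      · simp
      · have hnv : 0 < ‖v‖ := norm_pos_iff.2 hv0
        set c : ℝ := r / (2 * ‖v‖) with hc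
        have hcpos : 0 < c := by positivity
        have hwq : (c : ℂ) • v ∈ q := q.smul_mem _ hv
        set w : q := ⟨(c : ℂ) • v, hwq⟩ with hw
        have hwnorm : ‖(w : X)‖ = r / 2 := by
          show ‖(c : ℂ) • v‖ = r / 2
          rw [norm_smul, Complex.norm_real, Real.norm_eq_abs, abs_of_pos hcpos, hc]
          field_simp
        have hmem : z0 + w ∈ Metric.ball z0 r := by
          rw [Metric.mem_ball, Subtype.dist_eq, Submodule.coe_add, dist_eq_norm]
          have : (z0 : X) + (w : X) - (z0 : X) = (w : X) := by abel
          rw [this, hwnorm]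
          linarith
        have h2M : ‖(T ^ n) ((z0 : X) + (w : X))‖ ≤ (M : ℝ) := by
          have := hball' hmem n
          simpa using this
        have hz0M : ‖(T ^ n) (z0 : X)‖ ≤ (M : ℝ) := hball' (Metric.mem_ball_self hr) n
        have hwM : ‖(T ^ n) ((w : X))‖ ≤ 2 * (M : ℝ) := by
          have hsplit : (T ^ n) ((w : X)) =
              (T ^ n) ((z0 : X) + (w : X)) - (T ^ n) (z0 : X) := by
            rw [map_add]; abel
          rw [hsplit]
          calc ‖(T ^ n) ((z0 : X) + (w : X)) - (T ^ n) (z0 : X)‖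
              ≤ ‖(T ^ n) ((z0 : X) + (w : X))‖ + ‖(T ^ n) (z0 : X)‖ := norm_sub_le _ _
            _ ≤ (M : ℝ) + (M : ℝ) := add_le_add h2M hz0M
            _ = 2 * (M : ℝ) := by ring
        have hsm : (T ^ n) ((w : X)) = (c : ℂ) • (T ^ n) v := by
          show (T ^ n) ((c : ℂ) • v) = _
          rw [map_smul]
        rw [hsm, norm_smul, Complex.norm_real, Real.norm_eq_abs, abs_of_pos hcpos] at hwM
        -- c * ‖T^n v‖ ≤ 2M, c = r/(2‖v‖)
        have : ‖(T ^ n) v‖ ≤ 2 * (M : ℝ) / c := by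
          rw [le_div_iff₀ hcpos]; linarith [hwM]
        calc ‖(T ^ n) v‖ ≤ 2 * (M : ℝ) / c := this
          _ = 4 * (M : ℝ) / r * ‖v‖ := by rw [hc]; field_simp; ring
          _ ≤ K * ‖v‖ := by rw [hK]; nlinarith
    -- contradiction with limsup > 0
    have hlimsup0 : limsup (fun n : ℕ => (‖(T ^ n) y‖₊ : ℝ≥0∞)) atTop = 0 := by
      refine le_antisymm ?_ zero_le
      refine ENNReal.le_of_forall_pos_le_add fun ε hε _ => ?_
      rw [zero_add]
      obtain ⟨n₀, -, hn₀⟩ := hy ((ε : ℝ) / K) (by positivity) 0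
      refine limsup_le_of_le (by isBoundedDefault) ?_
      rw [eventually_atTop]
      refine ⟨n₀, fun n hn => ?_⟩
      have h1 : ‖(T ^ (n - n₀)) ((T ^ n₀) y)‖ ≤ K * ‖(T ^ n₀) y‖ := hbd _ (horb n₀) _
      have h2 : (T ^ (n - n₀)) ((T ^ n₀) y) = (T ^ n) y := by
        rw [← ContinuousLinearMap.mul_apply, ← pow_add, Nat.sub_add_cancel hn]
      rw [h2] at h1
      have h3 : ‖(T ^ n) y‖ ≤ (ε : ℝ) := by
        calc ‖(T ^ n) y‖ ≤ K * ‖(T ^ n₀) y‖ := h1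
          _ ≤ K * ((ε : ℝ) / K) := mul_le_mul_of_nonneg_left hn₀.le hKpos.le
          _ = (ε : ℝ) := by field_simp
      rw [ENNReal.coe_le_coe]
      exact_mod_cast h3
    rw [hlimsup0] at hpos
    exact lt_irrefl _ hpos
  -- Baire category argument
  have hres : D ∩ (⋂ M : ℕ, (B M)ᶜ) ∈ residual q := by
    refine Filter.inter_mem (residual_of_dense_Gδ hDGδ hDdense) ?_
    rw [countable_iInter_mem]
    intro M
    exact residual_of_dense_open (hBclosed M).isOpen_compl
      (interior_eq_empty_iff_dense_compl.1 (hBint M))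
  obtain ⟨z, hzD, hzB⟩ := (dense_of_mem_residual hres).nonempty
  refine ⟨(z : X), ?_, ?_⟩
  · rw [liminf_nnnorm_zero_iff]
    intro ε hε N
    obtain ⟨k, hk⟩ := exists_nat_gt ε⁻¹
    obtain ⟨n, hn, hlt⟩ := hzD k N
    refine ⟨n, hn, hlt.trans ?_⟩
    have h1 : ε⁻¹ < (k : ℝ) + 1 := by linarith
    have h2 : (0 : ℝ) < (k : ℝ) + 1 := by positivity
    rw [inv_lt_iff_one_lt_mul₀ h2]
    rw [inv_lt_iff_one_lt_mul₀ hε] at h1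
    linarith [h1]
  · rw [limsup_nnnorm_top_iff]
    intro M
    obtain ⟨M', hM'⟩ := exists_nat_gt M
    have hzB' := Set.mem_iInter.1 hzB M'
    rw [Set.mem_compl_iff, hB] at hzB'
    simp only [Set.mem_setOf_eq, not_forall, not_le] at hzB'
    obtain ⟨n, hn⟩ := hzB'
    exact ⟨n, hM'.trans hn⟩

end Helpers

/-- Bermúdez et al.: a bounded operator on a complex Banach space is Li-Yorke chaotic
iff it admits an irregular vector. -/
theorem liYorkeChaotic_iff_exists_irregularVector {X : Type*}
    [NormedAddCommGroup X] [NormedSpace ℂ X] [CompleteSpace X] (T : X →L[ℂ] X) :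
    LiYorkeChaotic T ↔ ∃ x : X, IrregularVector T x := by
  constructor
  · rintro ⟨Γ, hΓc, hΓ⟩
    have hpair : ∃ u ∈ Γ, ∃ v ∈ Γ, u ≠ v := by
      by_contra h
      push_neg at h
      exact hΓc (Set.Subsingleton.countable fun a ha b hb => h a ha b hb)
    obtain ⟨u, hu, v, hv, huv⟩ := hpair
    obtain ⟨h0, hpos⟩ := hΓ u hu v hv huv
    have heq : (fun n : ℕ => (‖(T ^ n) u - (T ^ n) v‖₊ : ℝ≥0∞)) =
        fun n : ℕ => (‖(T ^ n) (u - v)‖₊ : ℝ≥0∞) := by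
      funext n; rw [map_sub]
    rw [heq] at h0 hpos
    obtain ⟨x, hx0, hxt⟩ := semi_irregular_imp_irregular T (u - v) h0 hpos
    exact ⟨x, hx0, hxt⟩
  · rintro ⟨x, hx⟩
    exact irregular_scrambled T x hx
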